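/- Let p be a local two-input two-output box with p(0,1|1,1) = p(1,0|1,1) = 0 (perfectly correlated outcomes on inputs x=y=1), p(0,0|0,0) > 0, Σ_b p(0,b|0,1) > 0 and Σ_a p(a,0|1,0) > 0. Let q_A, q_B ∈ [0,1] satisfy p(0,1|0,1) = q_A·Σ_b p(0,b|0,1) and p(1,0|1,0) = q_B·Σ_a p(a,0|1,0). If 0 ∈ α_n and 0 ∈ β_n for every n ∈ ℕ (i.e., q_A and q_B are common certainty between the observers at the event (a=0,b=0,x=0,y=0)), then q_A = q_B. -/

import Mathlib

open Kronecker ComplexOrder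

/-- A (bipartite) box: nonnegative entries, normalized for every input pair. -/
def IsBox {nA nB nX nY : ℕ} (p : Fin nA → Fin nB → Fin nX → Fin nY → ℝ) : Prop :=
  (∀ a b x y, 0 ≤ p a b x y) ∧ (∀ x y, (∑ a, ∑ b, p a b x y) = 1)

/-- No-signaling: each party's marginal does not depend on the other's input. -/
def NoSignaling {nA nB nX nY : ℕ} (p : Fin nA → Fin nB → Fin nX → Fin nY → ℝ) : Prop :=
  (∀ b y x x', (∑ a, p a b x y) = ∑ a, p a b x' y) ∧
  (∀ a x y y', (∑ b, p a b x y) = ∑ b, p a b x y')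

/-- Local (classical) box: a convex mixture of product deterministic/stochastic strategies. -/
def IsLocal {nA nB nX nY : ℕ} (p : Fin nA → Fin nB → Fin nX → Fin nY → ℝ) : Prop :=
  ∃ (Λ : ℕ) (w : Fin Λ → ℝ) (pA : Fin nA → Fin nX → Fin Λ → ℝ)
    (pB : Fin nB → Fin nY → Fin Λ → ℝ),
    (∀ l, 0 ≤ w l) ∧ ((∑ l, w l) = 1) ∧
    (∀ a x l, 0 ≤ pA a x l) ∧ (∀ x l, (∑ a, pA a x l) = 1) ∧
    (∀ b y l, 0 ≤ pB b y l) ∧ (∀ y l, (∑ b, pB b y l) = 1) ∧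
    (∀ a b x y, p a b x y = ∑ l, w l * pA a x l * pB b y l)

/-- Quantum box: realized by POVMs on a bipartite quantum state. -/
def IsQuantum {nA nB nX nY : ℕ} (p : Fin nA → Fin nB → Fin nX → Fin nY → ℝ) : Prop :=
  ∃ (dA dB : ℕ) (_ : 0 < dA) (_ : 0 < dB)
    (ρ : Matrix (Fin dA × Fin dB) (Fin dA × Fin dB) ℂ)
    (E : Fin nX → Fin nA → Matrix (Fin dA) (Fin dA) ℂ)
    (F : Fin nY → Fin nB → Matrix (Fin dB) (Fin dB) ℂ),
    ρ.PosSemidef ∧ ρ.trace = 1 ∧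
    (∀ x a, (E x a).PosSemidef) ∧ (∀ x, (∑ a, E x a) = 1) ∧
    (∀ y b, (F y b).PosSemidef) ∧ (∀ y, (∑ b, F y b) = 1) ∧
    (∀ a b x y, ((E x a ⊗ₖ F y b) * ρ).trace = (p a b x y : ℂ))

open Classical in
/-- The certainty hierarchy `(α_n, β_n)` of the agreement framework:
`α₀` are Alice's outputs (on input `x = 0`) from which she assigns conditional
probability `qA` to Bob outputting `1` on input `y = 1`; `β₀` is the analogue
for Bob; and at each later stage each party is moreover certain (on inputs
`x = y = 0`) that the other's output lies in the previous stage's set. -/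
noncomputable def alphaBeta {nA nB nX nY : ℕ} [NeZero nA] [NeZero nB] [NeZero nX] [NeZero nY]
    (p : Fin nA → Fin nB → Fin nX → Fin nY → ℝ) (qA qB : ℝ) :
    ℕ → Set (Fin nA) × Set (Fin nB)
  | 0 =>
      ({a | 0 < (∑ b, p a b 0 1) ∧ p a 1 0 1 = qA * (∑ b, p a b 0 1)},
       {b | 0 < (∑ a, p a b 1 0) ∧ p 1 b 1 0 = qB * (∑ a, p a b 1 0)})
  | n + 1 =>
      ({a | a ∈ (alphaBeta p qA qB n).1 ∧ 0 < (∑ b, p a b 0 0) ∧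
            (∑ b, if b ∈ (alphaBeta p qA qB n).2 then p a b 0 0 else 0) = ∑ b, p a b 0 0},
       {b | b ∈ (alphaBeta p qA qB n).2 ∧ 0 < (∑ a, p a b 0 0) ∧
            (∑ a, if a ∈ (alphaBeta p qA qB n).1 then p a b 0 0 else 0) = ∑ a, p a b 0 0})

/-- The box gives rise to common certainty of disagreement: for some `qA ≠ qB` in `[0,1]`,
the outputs on inputs `x = y = 1` are perfectly correlated, the event
`(a,b,x,y) = (0,0,0,0)` has positive probability, and `0 ∈ α_n`, `0 ∈ β_n` for every `n`. -/
def CommonCertaintyOfDisagreement {nA nB nX nY : ℕ}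
    [NeZero nA] [NeZero nB] [NeZero nX] [NeZero nY]
    (p : Fin nA → Fin nB → Fin nX → Fin nY → ℝ) : Prop :=
  ∃ qA qB : ℝ, qA ∈ Set.Icc (0:ℝ) 1 ∧ qB ∈ Set.Icc (0:ℝ) 1 ∧ qA ≠ qB ∧
    (∀ (a : Fin nA) (b : Fin nB), (a : ℕ) ≠ (b : ℕ) → p a b 1 1 = 0) ∧ 0 < p 0 0 0 0 ∧
    (∀ n : ℕ, (0 : Fin nA) ∈ (alphaBeta p qA qB n).1 ∧ (0 : Fin nB) ∈ (alphaBeta p qA qB n).2)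

/-- The box gives rise to singular disagreement: perfectly correlated outputs on inputs
`x = y = 1`, positive probability of `(0,0,0,0)`, Alice assigns conditional probability
`qA = 1` to `b = 1` given `a = 0, x = 0, y = 1`, and Bob assigns conditional probability
`qB = 0` to `a = 1` given `b = 0, x = 1, y = 0`. -/
def SingularDisagreement {nA nB nX nY : ℕ}
    [NeZero nA] [NeZero nB] [NeZero nX] [NeZero nY]
    (p : Fin nA → Fin nB → Fin nX → Fin nY → ℝ) : Prop :=
  (∀ (a : Fin nA) (b : Fin nB), (a : ℕ) ≠ (b : ℕ) → p a b 1 1 = 0) ∧ 0 < p 0 0 0 0 ∧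
  (0 < ∑ b, p 0 b 0 1) ∧ (p 0 1 0 1 = ∑ b, p 0 b 0 1) ∧
  (0 < ∑ a, p a 0 1 0) ∧ (p 1 0 1 0 = 0)


/-- Classical agreement theorem for local two-input two-output boxes:
if the (conditional) estimates `qA`, `qB` of the perfectly correlated events of interest
are common certainty at the event `(a,b,x,y) = (0,0,0,0)`, then `qA = qB`. -/
theorem local_boxes_cannot_agree_to_disagree
    (p : Fin 2 → Fin 2 → Fin 2 → Fin 2 → ℝ)
    (hbox : IsBox p) (hloc : IsLocal p)
    (hpc1 : p 0 1 1 1 = 0) (hpc2 : p 1 0 1 1 = 0)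
    (h00 : 0 < p 0 0 0 0)
    (hmA : 0 < ∑ b, p 0 b 0 1) (hmB : 0 < ∑ a, p a 0 1 0)
    (qA qB : ℝ) (hqA : qA ∈ Set.Icc (0:ℝ) 1) (hqB : qB ∈ Set.Icc (0:ℝ) 1)
    (hA : p 0 1 0 1 = qA * (∑ b, p 0 b 0 1))
    (hB : p 1 0 1 0 = qB * (∑ a, p a 0 1 0))
    (hcc : ∀ n : ℕ, (0 : Fin 2) ∈ (alphaBeta p qA qB n).1 ∧
                    (0 : Fin 2) ∈ (alphaBeta p qA qB n).2) :
    qA = qB := by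
  classical
  obtain ⟨hnn, hnorm⟩ := hbox
  obtain ⟨Λ, w, pA, pB, hw0, hw1, hpA0, hpA1, hpB0, hpB1, hp⟩ := hloc
  set Sa : Finset (Fin 2) :=
    Finset.univ.filter (fun a => ∀ n, a ∈ (alphaBeta p qA qB n).1) with hSa
  set Sb : Finset (Fin 2) :=
    Finset.univ.filter (fun b => ∀ n, b ∈ (alphaBeta p qA qB n).2) with hSb
  have h0a : (0 : Fin 2) ∈ Sa := by
    simp only [hSa, Finset.mem_filter, Finset.mem_univ, true_and]
    exact fun n => (hcc n).1
  have h0b : (0 : Fin 2) ∈ Sb := by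
    simp only [hSb, Finset.mem_filter, Finset.mem_univ, true_and]
    exact fun n => (hcc n).2
  -- pointwise vanishing outside Sa × Sb on inputs (0,0)
  have hzero1 : ∀ a ∈ Sa, ∀ b ∈ Sbᶜ, p a b 0 0 = 0 := by
    intro a ha b hb
    simp only [hSa, Finset.mem_filter, Finset.mem_univ, true_and] at ha
    simp only [Finset.mem_compl, hSb, Finset.mem_filter, Finset.mem_univ, true_and] at hb
    push_neg at hb
    obtain ⟨n, hbn⟩ := hb
    have han := ha (n + 1)
    simp only [alphaBeta, Set.mem_setOf_eq] at han
    obtain ⟨-, -, hsum⟩ := han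
    have hz : ∑ b', (p a b' 0 0 - if b' ∈ (alphaBeta p qA qB n).2 then p a b' 0 0 else 0) = 0 := by
      rw [Finset.sum_sub_distrib, hsum, sub_self]
    have hterm := (Finset.sum_eq_zero_iff_of_nonneg (fun b' _ => by
        by_cases h : b' ∈ (alphaBeta p qA qB n).2 <;> simp [h, hnn])).mp hz b (Finset.mem_univ b)
    simpa [hbn] using hterm
  have hzero2 : ∀ b ∈ Sb, ∀ a ∈ Saᶜ, p a b 0 0 = 0 := by
    intro b hb a ha
    simp only [hSb, Finset.mem_filter, Finset.mem_univ, true_and] at hb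
    simp only [Finset.mem_compl, hSa, Finset.mem_filter, Finset.mem_univ, true_and] at ha
    push_neg at ha
    obtain ⟨n, han⟩ := ha
    have hbn := hb (n + 1)
    simp only [alphaBeta, Set.mem_setOf_eq] at hbn
    obtain ⟨-, -, hsum⟩ := hbn
    have hz : ∑ a', (p a' b 0 0 - if a' ∈ (alphaBeta p qA qB n).1 then p a' b 0 0 else 0) = 0 := by
      rw [Finset.sum_sub_distrib, hsum, sub_self]
    have hterm := (Finset.sum_eq_zero_iff_of_nonneg (fun a' _ => by
        by_cases h : a' ∈ (alphaBeta p qA qB n).1 <;> simp [h, hnn])).mp hz a (Finset.mem_univ a)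
    simpa [han] using hterm
  -- per-λ vanishing facts
  have lamfact : ∀ a b, p a b 0 0 = 0 → ∀ l, w l * (pA a 0 l * pB b 0 l) = 0 := by
    intro a b h0 l
    have hz : ∑ l', w l' * pA a 0 l' * pB b 0 l' = 0 := by rw [← hp]; exact h0
    have := (Finset.sum_eq_zero_iff_of_nonneg (fun l' _ =>
      mul_nonneg (mul_nonneg (hw0 l') (hpA0 a 0 l')) (hpB0 b 0 l'))).mp hz l (Finset.mem_univ l)
    linarith [this]
  have lam1 : ∀ a ∈ Sa, ∀ b ∈ Sbᶜ, ∀ l, w l * (pA a 0 l * pB b 0 l) = 0 :=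
    fun a ha b hb => lamfact a b (hzero1 a ha b hb)
  have lam2 : ∀ a ∈ Saᶜ, ∀ b ∈ Sb, ∀ l, w l * (pA a 0 l * pB b 0 l) = 0 :=
    fun a ha b hb => lamfact a b (hzero2 b hb a ha)
  -- per-λ perfect-correlation facts
  have pcfact : ∀ (a b : Fin 2), p a b 1 1 = 0 → ∀ l, w l * (pA a 1 l * pB b 1 l) = 0 := by
    intro a b h0 l
    have hz : ∑ l', w l' * pA a 1 l' * pB b 1 l' = 0 := by rw [← hp]; exact h0
    have := (Finset.sum_eq_zero_iff_of_nonneg (fun l' _ =>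
      mul_nonneg (mul_nonneg (hw0 l') (hpA0 a 1 l')) (hpB0 b 1 l'))).mp hz l (Finset.mem_univ l)
    linarith [this]
  have pc1 := pcfact 0 1 hpc1
  have pc2 := pcfact 1 0 hpc2
  -- aggregate quantities
  set A : Fin Λ → ℝ := fun l => ∑ a ∈ Sa, pA a 0 l with hAdef
  set B : Fin Λ → ℝ := fun l => ∑ b ∈ Sb, pB b 0 l with hBdef
  have hAc : ∀ l, (∑ a ∈ Saᶜ, pA a 0 l) = 1 - A l := by
    intro l
    have := Finset.sum_add_sum_compl Sa (fun a => pA a 0 l)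
    rw [hpA1 0 l] at this
    simp only [hAdef]
    linarith
  have hBc : ∀ l, (∑ b ∈ Sbᶜ, pB b 0 l) = 1 - B l := by
    intro l
    have := Finset.sum_add_sum_compl Sb (fun b => pB b 0 l)
    rw [hpB1 0 l] at this
    simp only [hBdef]
    linarith
  have hAB : ∀ l, w l * A l = w l * B l := by
    intro l
    have e1 : w l * (A l * (1 - B l)) = 0 := by
      rw [← hBc l]
      rw [show A l * (∑ b ∈ Sbᶜ, pB b 0 l) = ∑ a ∈ Sa, ∑ b ∈ Sbᶜ, pA a 0 l * pB b 0 l from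
        Finset.sum_mul_sum Sa Sbᶜ _ _]
      rw [Finset.mul_sum]
      refine Finset.sum_eq_zero fun a ha => ?_
      rw [Finset.mul_sum]
      exact Finset.sum_eq_zero fun b hb => lam1 a ha b hb l
    have e2 : w l * ((1 - A l) * B l) = 0 := by
      rw [← hAc l]
      rw [show (∑ a ∈ Saᶜ, pA a 0 l) * B l = ∑ a ∈ Saᶜ, ∑ b ∈ Sb, pA a 0 l * pB b 0 l from
        Finset.sum_mul_sum Saᶜ Sb _ _]
      rw [Finset.mul_sum]
      refine Finset.sum_eq_zero fun a ha => ?_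
      rw [Finset.mul_sum]
      exact Finset.sum_eq_zero fun b hb => lam2 a ha b hb l
    linear_combination e1 - e2
  have huv : ∀ l, w l * pA 1 1 l = w l * pB 1 1 l := by
    intro l
    have e1 := pc1 l
    have e2 := pc2 l
    have ha : pA 0 1 l = 1 - pA 1 1 l := by
      have := hpA1 1 l; rw [Fin.sum_univ_two] at this; linarith
    have hb : pB 0 1 l = 1 - pB 1 1 l := by
      have := hpB1 1 l; rw [Fin.sum_univ_two] at this; linarith
    rw [ha] at e1; rw [hb] at e2
    linear_combination e2 - e1
  -- marginals in λ form
  have hM1 : ∀ a : Fin 2, (∑ b, p a b 0 1) = ∑ l, w l * pA a 0 l := by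
    intro a
    simp_rw [hp]
    rw [Finset.sum_comm]
    refine Finset.sum_congr rfl fun l _ => ?_
    rw [← Finset.mul_sum, hpB1 1 l, mul_one]
  have hM2 : ∀ b : Fin 2, (∑ a, p a b 1 0) = ∑ l, w l * pB b 0 l := by
    intro b
    simp_rw [hp]
    rw [Finset.sum_comm]
    refine Finset.sum_congr rfl fun l _ => ?_
    have : ∀ a : Fin 2, w l * pA a 1 l * pB b 0 l = w l * pB b 0 l * pA a 1 l := fun a => by ring
    simp_rw [this]
    rw [← Finset.mul_sum, hpA1 1 l, mul_one]
  -- Alice's estimate equation summed over Sa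
  have hq1 : ∑ l, w l * A l * pB 1 1 l = qA * ∑ l, w l * A l := by
    have hl : ∑ a ∈ Sa, p a 1 0 1 = ∑ l, w l * A l * pB 1 1 l := by
      simp_rw [hp]
      rw [Finset.sum_comm]
      refine Finset.sum_congr rfl fun l _ => ?_
      simp only [hAdef]
      rw [Finset.mul_sum, Finset.sum_mul]
    have hr : ∑ a ∈ Sa, (∑ b, p a b 0 1) = ∑ l, w l * A l := by
      simp_rw [hM1]
      rw [Finset.sum_comm]
      refine Finset.sum_congr rfl fun l _ => ?_
      simp only [hAdef]
      rw [Finset.mul_sum]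
    have hea : ∀ a ∈ Sa, p a 1 0 1 = qA * ∑ b, p a b 0 1 := by
      intro a ha
      simp only [hSa, Finset.mem_filter, Finset.mem_univ, true_and] at ha
      have := ha 0
      simp only [alphaBeta, Set.mem_setOf_eq] at this
      exact this.2
    calc ∑ l, w l * A l * pB 1 1 l = ∑ a ∈ Sa, p a 1 0 1 := hl.symm
      _ = ∑ a ∈ Sa, qA * ∑ b, p a b 0 1 := Finset.sum_congr rfl hea
      _ = qA * ∑ a ∈ Sa, (∑ b, p a b 0 1) := by rw [Finset.mul_sum]
      _ = qA * ∑ l, w l * A l := by rw [hr]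
  -- Bob's estimate equation summed over Sb
  have hq2 : ∑ l, w l * pA 1 1 l * B l = qB * ∑ l, w l * B l := by
    have hl : ∑ b ∈ Sb, p 1 b 1 0 = ∑ l, w l * pA 1 1 l * B l := by
      simp_rw [hp]
      rw [Finset.sum_comm]
      refine Finset.sum_congr rfl fun l _ => ?_
      simp only [hBdef]
      rw [Finset.mul_sum]
    have hr : ∑ b ∈ Sb, (∑ a, p a b 1 0) = ∑ l, w l * B l := by
      simp_rw [hM2]
      rw [Finset.sum_comm]
      refine Finset.sum_congr rfl fun l _ => ?_
      simp only [hBdef]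
      rw [Finset.mul_sum]
    have heb : ∀ b ∈ Sb, p 1 b 1 0 = qB * ∑ a, p a b 1 0 := by
      intro b hb
      simp only [hSb, Finset.mem_filter, Finset.mem_univ, true_and] at hb
      have := hb 0
      simp only [alphaBeta, Set.mem_setOf_eq] at this
      exact this.2
    calc ∑ l, w l * pA 1 1 l * B l = ∑ b ∈ Sb, p 1 b 1 0 := hl.symm
      _ = ∑ b ∈ Sb, qB * ∑ a, p a b 1 0 := Finset.sum_congr rfl heb
      _ = qB * ∑ b ∈ Sb, (∑ a, p a b 1 0) := by rw [Finset.mul_sum]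
      _ = qB * ∑ l, w l * B l := by rw [hr]
  -- positivity
  have hT : p 0 0 0 0 ≤ ∑ l, w l * A l := by
    rw [hp]
    refine Finset.sum_le_sum fun l _ => ?_
    have h1 : pA 0 0 l ≤ A l := Finset.single_le_sum (fun a _ => hpA0 a 0 l) h0a
    have h2 : pB 0 0 l ≤ 1 := by
      have hs := hpB1 0 l
      have := Finset.single_le_sum (fun b _ => hpB0 b 0 l) (Finset.mem_univ (0 : Fin 2))
      linarith
    have h3 : 0 ≤ pA 0 0 l := hpA0 0 0 l
    have h4 : 0 ≤ pB 0 0 l := hpB0 0 0 l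
    have h5 : 0 ≤ w l := hw0 l
    have e1 : w l * pA 0 0 l * pB 0 0 l ≤ w l * pA 0 0 l * 1 :=
      mul_le_mul_of_nonneg_left h2 (mul_nonneg h5 h3)
    have e2 : w l * pA 0 0 l ≤ w l * A l := mul_le_mul_of_nonneg_left h1 h5
    linarith
  have hpos : 0 < ∑ l, w l * A l := lt_of_lt_of_le h00 hT
  -- combine
  have hsum_eq : ∑ l, w l * A l = ∑ l, w l * B l := Finset.sum_congr rfl fun l _ => hAB l
  have hnum : ∑ l, w l * A l * pB 1 1 l = ∑ l, w l * pA 1 1 l * B l :=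
    Finset.sum_congr rfl fun l _ => by
      linear_combination (pB 1 1 l) * hAB l - (B l) * huv l
  have hfin : qA * (∑ l, w l * A l) = qB * (∑ l, w l * A l) := by
    rw [← hq1, hnum, hq2, hsum_eq]
  exact mul_right_cancel₀ (ne_of_gt hpos) hfin
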